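/- Let n be a positive integer, λ_1,…,λ_n positive reals, τ > 0, and f_1,…,f_n : ℝ → ℝ continuous, with f_j satisfying positive feedback for 1 ≤ j ≤ n−1 and f_n satisfying negative feedback, and with each f_j continuously differentiable in a neighborhood of 0 with f_j′(0) ≠ 0. Then the cyclic system has no small non-oscillating solutions: if x = (x_1,…,x_n) is a solution for which there exists T ≥ 0 with x_j(t) ≠ 0 for all j and all t ≥ T (non-oscillating), then x is not a small solution, i.e., there exists λ > 0 such that x(t)·e^{λt} does not converge to 0 as t → ∞. -/

import Mathlib

open Set Filter Real

/-- MVT-based lower bound. -/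
lemma mvt_lower (y y' : ℝ → ℝ) (a b : ℝ) (hab : a < b)
    (hcont : ContinuousOn y (Icc a b))
    (hderiv : ∀ s ∈ Ioo a b, HasDerivAt y (y' s) s)
    (m : ℝ) (hm : ∀ s ∈ Ioo a b, y' s ≤ -m) (hyb : 0 ≤ y b) :
    (b - a) * m ≤ y a := by
  obtain ⟨ξ, hξ, hslope⟩ := exists_hasDerivAt_eq_slope y y' hab hcont hderiv
  have h1 : (y b - y a) / (b - a) ≤ -m := hslope ▸ hm ξ hξ
  have h2 : y b - y a ≤ -m * (b - a) := by
    rw [div_le_iff₀ (by linarith)] at h1; linarith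
  nlinarith

/-- A continuous function with strict positive feedback vanishes at 0. -/
lemma feedback_zero (f : ℝ → ℝ) (hf : Continuous f)
    (h : ∀ y : ℝ, y ≠ 0 → 0 < y * f y) : f 0 = 0 := by
  have hto : Tendsto f (nhdsWithin 0 (Ioi 0)) (nhds (f 0)) :=
    (hf.tendsto 0).mono_left nhdsWithin_le_nhds
  have hto' : Tendsto f (nhdsWithin 0 (Iio 0)) (nhds (f 0)) :=
    (hf.tendsto 0).mono_left nhdsWithin_le_nhds
  have h1 : 0 ≤ f 0 := by
    refine ge_of_tendsto hto ?_
    filter_upwards [self_mem_nhdsWithin] with y hy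
    have hy' : 0 < y := hy
    have := h y (ne_of_gt hy')
    nlinarith
  have h2 : f 0 ≤ 0 := by
    refine le_of_tendsto hto' ?_
    filter_upwards [self_mem_nhdsWithin] with y hy
    have hy' : y < 0 := hy
    have := h y (ne_of_lt hy')
    nlinarith
  linarith

/-- Linear lower bound near 0 for a function with nonzero derivative at 0. -/
lemma lin_lower (f : ℝ → ℝ) (d : ℝ) (hf0 : f 0 = 0) (hd : HasDerivAt f d 0)
    (hd0 : d ≠ 0) : ∃ δ c : ℝ, 0 < δ ∧ 0 < c ∧ ∀ y : ℝ, |y| ≤ δ → c * |y| ≤ |f y| := by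
  have hlo := hasDerivAt_iff_isLittleO.mp hd
  have hev := hlo.def (show (0:ℝ) < |d| / 2 by positivity)
  rw [Metric.eventually_nhds_iff] at hev
  obtain ⟨r, hr, hball⟩ := hev
  refine ⟨r / 2, |d| / 2, by positivity, by positivity, fun y hy => ?_⟩
  have hyr : dist y 0 < r := by
    rw [Real.dist_eq, sub_zero]; linarith
  have := hball hyr
  simp only [hf0, sub_zero, smul_eq_mul, Real.norm_eq_abs] at this
  have h1 : |y * d| ≤ |f y| + |f y - y * d| := by
    calc |y * d| = |f y - (f y - y * d)| := by ring_nf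
      _ ≤ |f y| + |f y - y * d| := abs_sub _ _
  rw [abs_mul] at h1
  nlinarith [abs_nonneg y, abs_nonneg d]

/-- Sign transfer. -/
lemma sign_mul_pos {ε v w : ℝ} (hε : ε = 1 ∨ ε = -1) (hv : 0 < ε * v)
    (hw : 0 < v * w) : 0 < ε * w := by
  rcases hε with rfl | rfl
  · simp only [one_mul] at hv ⊢
    rcases mul_pos_iff.mp hw with ⟨_, h⟩ | ⟨h, _⟩
    · exact h
    · linarith
  · simp only [neg_one_mul, neg_pos] at hv ⊢
    rcases mul_pos_iff.mp hw with ⟨h, _⟩ | ⟨_, h⟩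
    · linarith
    · exact h

lemma abs_eq_sign_mul {ε v : ℝ} (hε : ε = 1 ∨ ε = -1) (h : 0 < ε * v) :
    |v| = ε * v := by
  rcases hε with rfl | rfl
  · rw [one_mul] at h ⊢; exact abs_of_pos h
  · rw [neg_one_mul] at h ⊢
    rw [abs_of_neg (by linarith)]

lemma sign_mul_le_abs {ε : ℝ} (v : ℝ) (hε : ε = 1 ∨ ε = -1) : ε * v ≤ |v| := by
  rcases hε with rfl | rfl
  · rw [one_mul]; exact le_abs_self v
  · rw [neg_one_mul]; exact neg_le_abs v

lemma pm_neg {a b : ℝ} (ha : a = 1 ∨ a = -1) (hb : b = 1 ∨ b = -1)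
    (hab : a ≠ b) : a = -b := by
  rcases ha with rfl | rfl <;> rcases hb with rfl | rfl
  · exact absurd rfl hab
  · norm_num
  · norm_num
  · exact absurd rfl hab

lemma const_sign (g : ℝ → ℝ) (T : ℝ) (hc : ContinuousOn g (Ici T))
    (hnz : ∀ t, T ≤ t → g t ≠ 0) :
    ∃ ε : ℝ, (ε = 1 ∨ ε = -1) ∧ ∀ t, T ≤ t → 0 < ε * g t := by
  by_cases hp : 0 < g T
  · refine ⟨1, Or.inl rfl, fun t ht => ?_⟩
    rw [one_mul]
    by_contra h
    have hlt : g t < 0 := lt_of_le_of_ne (not_lt.mp h) (hnz t ht)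
    obtain ⟨s, hsmem, hgs⟩ := intermediate_value_Icc' ht (hc.mono Icc_subset_Ici_self)
      (⟨hlt.le, hp.le⟩ : (0:ℝ) ∈ Icc (g t) (g T))
    exact hnz s hsmem.1 hgs
  · have hlt : g T < 0 := lt_of_le_of_ne (not_lt.mp hp) (hnz T le_rfl)
    refine ⟨-1, Or.inr rfl, fun t ht => ?_⟩
    rw [neg_one_mul, neg_pos]
    by_contra h
    have hgt : 0 < g t := lt_of_le_of_ne (not_lt.mp h) (Ne.symm (hnz t ht))
    obtain ⟨s, hsmem, hgs⟩ := intermediate_value_Icc ht (hc.mono Icc_subset_Ici_self)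
      (⟨hlt.le, hgt.le⟩ : (0:ℝ) ∈ Icc (g T) (g t))
    exact hnz s hsmem.1 hgs


/-- A solution of the cyclic system with delay on `[T, ∞)` (0-indexed components
`x 0, …, x (n-1)`). -/
def IsCyclicSolution (n : ℕ) (lam : ℕ → ℝ) (τ : ℝ) (f : ℕ → ℝ → ℝ)
    (T : ℝ) (x : ℕ → ℝ → ℝ) : Prop :=
  ContinuousOn (x 0) (Set.Ici (T - τ)) ∧
  (∀ j < n, ContinuousOn (x j) (Set.Ici T)) ∧
  ∀ t : ℝ, T < t →
    (∀ j : ℕ, j + 1 < n →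
      HasDerivAt (x j) (-lam j * x j t + f j (x (j + 1) t)) t) ∧
    HasDerivAt (x (n - 1)) (-lam (n - 1) * x (n - 1) t + f (n - 1) (x 0 (t - τ))) t

set_option maxHeartbeats 2000000

/-- Corollary 5: the cyclic system has no small non-oscillating solutions: if a
solution has all components eventually nonzero, then there is `μ > 0` such that
`x(t) e^{μ t}` does not converge to `0` (i.e. some component of `x(t) e^{μ t}`
does not converge to `0`). -/
theorem no_small_nonoscillating_solutions
    (n : ℕ) (hn : 0 < n) (lam : ℕ → ℝ) (hlam : ∀ j < n, 0 < lam j)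
    (τ : ℝ) (hτ : 0 < τ) (f : ℕ → ℝ → ℝ) (hf : ∀ j < n, Continuous (f j))
    (hpos : ∀ j < n - 1, ∀ y : ℝ, y ≠ 0 → 0 < y * f j y)
    (hneg : ∀ y : ℝ, y ≠ 0 → y * f (n - 1) y < 0)
    (hC1 : ∀ j < n, ContDiffAt ℝ 1 (f j) 0)
    (hderiv0 : ∀ j < n, deriv (f j) 0 ≠ 0)
    (x : ℕ → ℝ → ℝ) (hx : IsCyclicSolution n lam τ f 0 x)
    (T : ℝ) (hT : 0 ≤ T)
    (hnz : ∀ j < n, ∀ t : ℝ, T ≤ t → x j t ≠ 0) :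
    ∃ μ : ℝ, 0 < μ ∧ ∃ j < n,
      ¬ Filter.Tendsto (fun t : ℝ => x j t * Real.exp (μ * t))
          Filter.atTop (nhds 0) := by
  by_contra hcon
  push_neg at hcon
  obtain ⟨hxc0, hxc, hode⟩ := hx
  -- constant signs
  have hsign : ∀ j : ℕ, ∃ ε : ℝ, (ε = 1 ∨ ε = -1) ∧
      (j < n → ∀ t, T ≤ t → 0 < ε * x j t) := by
    intro j
    by_cases hj : j < n
    · obtain ⟨ε, hε1, hεpos⟩ := const_sign (x j) T ((hxc j hj).mono (Ici_subset_Ici.mpr hT)) (hnz j hj)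
      exact ⟨ε, hε1, fun _ => hεpos⟩
    · exact ⟨1, Or.inl rfl, fun hc => absurd hc hj⟩
  choose ε hε1 hεp using hsign
  -- linear lower bounds near 0
  have hlinear : ∀ j : ℕ, ∃ δ c : ℝ, 0 < δ ∧ 0 < c ∧
      (j < n → ∀ v : ℝ, |v| ≤ δ → c * |v| ≤ |f j v|) := by
    intro j
    by_cases hj : j < n
    · have hf0 : f j 0 = 0 := by
        rcases lt_or_ge j (n-1) with hj' | hj'
        · exact feedback_zero (f j) (hf j hj) (hpos j hj')
        · have hjeq : j = n - 1 := by omega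
          subst hjeq
          have hz := feedback_zero (fun v => -(f (n-1) v)) (hf (n-1) hj).neg
            (fun v hv => by
              show (0:ℝ) < v * -(f (n-1) v)
              nlinarith [hneg v hv])
          have : -(f (n-1) 0) = 0 := hz
          linarith
      have hd : HasDerivAt (f j) (deriv (f j) 0) 0 :=
        ((hC1 j hj).differentiableAt one_ne_zero).hasDerivAt
      obtain ⟨δ, c, hδ, hc, hb⟩ := lin_lower (f j) _ hf0 hd (hderiv0 j hj)
      exact ⟨δ, c, hδ, hc, fun _ => hb⟩
    · exact ⟨1, 1, one_pos, one_pos, fun hc => absurd hc hj⟩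
  choose δf cf hδf hcf hflin using hlinear
  have hne : (Finset.range n).Nonempty := ⟨0, Finset.mem_range.mpr hn⟩
  set δ := (Finset.range n).inf' hne δf with hδdef
  have hδpos : 0 < δ := by
    rw [hδdef, Finset.lt_inf'_iff]
    exact fun i _ => hδf i
  have hδle : ∀ j, j < n → δ ≤ δf j := fun j hj =>
    Finset.inf'_le _ (Finset.mem_range.mpr hj)
  -- eventual smallness of all components
  have hev : ∀ᶠ t in atTop, ∀ j ∈ Finset.range n, |x j t| ≤ δ := by
    rw [Filter.eventually_all_finset]
    intro j hjmem
    have hj : j < n := Finset.mem_range.mp hjmem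
    have h1 := hcon 1 one_pos j hj
    have h2 := (Metric.tendsto_nhds.mp h1) δ hδpos
    filter_upwards [h2, eventually_ge_atTop (0:ℝ)] with t hd ht0
    rw [Real.dist_eq, sub_zero] at hd
    have he1 : 1 ≤ Real.exp (1 * t) := Real.one_le_exp (by linarith)
    have habs : |x j t| ≤ |x j t * Real.exp (1 * t)| := by
      rw [abs_mul, abs_of_pos (Real.exp_pos _)]
      nlinarith [abs_nonneg (x j t)]
    linarith
  obtain ⟨S, hS⟩ := Filter.eventually_atTop.mp hev
  set T₁ := max (S + τ) (T + 2*τ) with hT₁def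
  have hT₁S : S + τ ≤ T₁ := le_max_left _ _
  have hT₁T : T + 2*τ ≤ T₁ := le_max_right _ _
  have hT₁pos : 0 < T₁ := by linarith
  have hT₁Tτ : T + τ ≤ T₁ := by linarith
  have hTT₁ : T ≤ T₁ := by linarith
  -- notation
  set ι : ℕ → ℝ := fun j => if j + 1 < n then ε (j+1) else -ε 0 with hιdef
  set κ : ℕ → ℝ := fun j => if j + 1 < n then ε (j+1) else ε 0 with hκdef
  set inp : ℕ → ℝ → ℝ := fun j t => if j + 1 < n then x (j+1) t else x 0 (t - τ)
    with hinpdef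
  set y : ℕ → ℝ → ℝ := fun j t => ε j * (x j t * Real.exp (lam j * t)) with hydef
  have hι1 : ∀ j, ι j = 1 ∨ ι j = -1 := by
    intro j
    simp only [hιdef]
    split_ifs with hcs
    · exact hε1 (j+1)
    · rcases hε1 0 with h0 | h0 <;> rw [h0] <;> norm_num
  have hκ1 : ∀ j, κ j = 1 ∨ κ j = -1 := by
    intro j
    simp only [hκdef]
    split_ifs with hcs
    · exact hε1 (j+1)
    · exact hε1 0
  -- sign of inputs
  have hinp_sign : ∀ j, j < n → ∀ t : ℝ, T + τ ≤ t →
      0 < ι j * f j (inp j t) ∧ 0 < κ j * inp j t := by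
    intro j hj t ht
    have htT : T ≤ t := by linarith
    simp only [hιdef, hκdef, hinpdef]
    split_ifs with hcs
    · have hjn1 : j < n - 1 := by omega
      have hxn : x (j+1) t ≠ 0 := hnz (j+1) hcs t htT
      have hfb := hpos j hjn1 (x (j+1) t) hxn
      have hεx := hεp (j+1) hcs t htT
      exact ⟨sign_mul_pos (hε1 (j+1)) hεx hfb, hεx⟩
    · have hjn1 : j = n - 1 := by omega
      have htτ : T ≤ t - τ := by linarith
      have hxn : x 0 (t - τ) ≠ 0 := hnz 0 hn _ htτ
      have hεx := hεp 0 hn _ htτ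
      have hfb : 0 < x 0 (t - τ) * (-(f j (x 0 (t - τ)))) := by
        rw [hjn1]
        nlinarith [hneg (x 0 (t - τ)) hxn]
      have hsg := sign_mul_pos (hε1 0) hεx hfb
      refine ⟨?_, hεx⟩
      rw [neg_mul_comm]
      exact hsg
  -- derivative of weighted components
  have hyderiv : ∀ j, j < n → ∀ t : ℝ, 0 < t →
      HasDerivAt (y j) (Real.exp (lam j * t) * (ε j * f j (inp j t))) t := by
    intro j hj t ht
    have hx' : HasDerivAt (x j) (-lam j * x j t + f j (inp j t)) t := by
      simp only [hinpdef]
      split_ifs with hcs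
      · exact (hode t ht).1 j hcs
      · have hjn1 : j = n - 1 := by omega
        rw [hjn1]
        exact (hode t ht).2
    have hlin' : HasDerivAt (fun s : ℝ => lam j * s) (lam j) t := by
      simpa using (hasDerivAt_id t).const_mul (lam j)
    have hexp : HasDerivAt (fun s : ℝ => Real.exp (lam j * s))
        (Real.exp (lam j * t) * lam j) t := hlin'.exp
    have hprod : HasDerivAt (fun s => ε j * (x j s * Real.exp (lam j * s)))
        (ε j * ((-lam j * x j t + f j (inp j t)) * Real.exp (lam j * t) +
          x j t * (Real.exp (lam j * t) * lam j))) t := (hx'.mul hexp).const_mul (ε j)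
    simp only [hydef]
    convert hprod using 1
    ring
  -- positivity of weighted components
  have hypos : ∀ j, j < n → ∀ t, T ≤ t → 0 < y j t := by
    intro j hj t ht
    simp only [hydef]
    nlinarith [mul_pos (hεp j hj t ht) (Real.exp_pos (lam j * t))]
  -- continuity of weighted components
  have hyc : ∀ j, j < n → ∀ a : ℝ, T ≤ a → ContinuousOn (y j) (Ici a) := by
    intro j hj a ha
    simp only [hydef]
    exact continuousOn_const.mul (((hxc j hj).mono (Ici_subset_Ici.mpr (by linarith))).mul
      (Continuous.continuousOn (Real.continuous_exp.comp (continuous_const.mul continuous_id))))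
  by_cases hcase : ∃ j, j < n ∧ ι j = ε j
  · -- easy case : some weighted component is nondecreasing
    obtain ⟨j, hj, hιε⟩ := hcase
    have hmono : MonotoneOn (y j) (Ici T₁) := by
      apply monotoneOn_of_deriv_nonneg (convex_Ici T₁) (hyc j hj T₁ hTT₁)
      · intro s hs
        rw [interior_Ici] at hs
        have hs0 : 0 < s := lt_trans hT₁pos hs
        exact (hyderiv j hj s hs0).differentiableAt.differentiableWithinAt
      · intro s hs
        rw [interior_Ici] at hs
        have hs' : T₁ < s := hs
        have hs0 : 0 < s := lt_trans hT₁pos hs'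
        rw [(hyderiv j hj s hs0).deriv]
        have hsT : T + τ ≤ s := by linarith
        have hsgn := (hinp_sign j hj s hsT).1
        rw [hιε] at hsgn
        exact le_of_lt (mul_pos (Real.exp_pos _) hsgn)
    have hm := hypos j hj T₁ hTT₁
    have htend := hcon (lam j) (hlam j hj) j hj
    have hev2 := (Metric.tendsto_nhds.mp htend) (y j T₁) hm
    obtain ⟨t, hlt, htT₁⟩ := (hev2.and (eventually_ge_atTop T₁)).exists
    rw [Real.dist_eq, sub_zero] at hlt
    have hyt : y j T₁ ≤ y j t := hmono self_mem_Ici htT₁ htT₁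
    have hub : y j t ≤ |x j t * Real.exp (lam j * t)| := by
      simp only [hydef]
      exact sign_mul_le_abs _ (hε1 j)
    linarith
  · -- hard case : all weighted components are decreasing
    push_neg at hcase
    have hιε : ∀ j, j < n → ι j = -ε j :=
      fun j hj => pm_neg (hι1 j) (hε1 j) (hcase j hj)
    have hanti : ∀ j, j < n → AntitoneOn (y j) (Ici (T + τ)) := by
      intro j hj
      apply antitoneOn_of_deriv_nonpos (convex_Ici _) (hyc j hj _ (by linarith))
      · intro s hs
        rw [interior_Ici] at hs
        have hs' : T + τ < s := hs
        have hs0 : 0 < s := by linarith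
        exact (hyderiv j hj s hs0).differentiableAt.differentiableWithinAt
      · intro s hs
        rw [interior_Ici] at hs
        have hs' : T + τ < s := hs
        have hs0 : 0 < s := by linarith
        rw [(hyderiv j hj s hs0).deriv]
        have hsgn := (hinp_sign j hj s hs'.le).1
        rw [hιε j hj] at hsgn
        have hneg' : ε j * f j (inp j s) < 0 := by nlinarith [hsgn]
        exact le_of_lt (mul_neg_of_pos_of_neg (Real.exp_pos _) hneg')
    have hdecay : ∀ j, j < n → ∀ a b : ℝ, T + τ ≤ a → a ≤ b →
        ε j * x j b ≤ ε j * x j a := by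
      intro j hj a b ha hab
      have h1 := hanti j hj (mem_Ici.mpr ha) (mem_Ici.mpr (le_trans ha hab)) hab
      simp only [hydef] at h1
      have hea : (0:ℝ) < Real.exp (lam j * a) := Real.exp_pos _
      have heb : Real.exp (lam j * a) ≤ Real.exp (lam j * b) :=
        Real.exp_le_exp.mpr (mul_le_mul_of_nonneg_left hab (hlam j hj).le)
      have hxb : 0 < ε j * x j b := hεp j hj b (by linarith)
      nlinarith [h1, hea, heb, hxb]
    set h := τ / (2 * n) with hhdef
    have hnR : (0:ℝ) < n := by exact_mod_cast hn
    have hh : 0 < h := by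
      rw [hhdef]; positivity
    -- the key one-step estimate
    have hstep : ∀ j, j < n → ∀ t : ℝ, T₁ ≤ t →
        cf j * h * (κ j * inp j (t + h)) ≤ ε j * x j t := by
      intro j hj t ht
      have ht0 : 0 < t := lt_of_lt_of_le hT₁pos ht
      have hA : 0 < κ j * inp j (t + h) :=
        (hinp_sign j hj (t+h) (by linarith)).2
      have hbound : ∀ s ∈ Ioo t (t + h),
          (fun s => Real.exp (lam j * s) * (ε j * f j (inp j s))) s ≤
            -(cf j * Real.exp (lam j * t) * (κ j * inp j (t + h))) := by
        intro s hs
        obtain ⟨hs1, hs2⟩ := hs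
        show Real.exp (lam j * s) * (ε j * f j (inp j s)) ≤
          -(cf j * Real.exp (lam j * t) * (κ j * inp j (t + h)))
        have hsT : T + τ ≤ s := by linarith
        obtain ⟨hfs, hvs⟩ := hinp_sign j hj s hsT
        have habs : |inp j s| ≤ δf j := by
          refine le_trans ?_ (hδle j hj)
          simp only [hinpdef]
          split_ifs with hcs
          · exact hS s (by linarith) (j+1) (Finset.mem_range.mpr hcs)
          · exact hS (s - τ) (by linarith) 0 (Finset.mem_range.mpr hn)
        have hflow := hflin j hj (inp j s) habs
        rw [abs_eq_sign_mul (hκ1 j) hvs, abs_eq_sign_mul (hι1 j) hfs] at hflow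
        have hAle : κ j * inp j (t + h) ≤ κ j * inp j s := by
          simp only [hκdef, hinpdef]
          split_ifs with hcs
          · exact hdecay (j+1) hcs s (t+h) hsT hs2.le
          · exact hdecay 0 hn (s - τ) (t + h - τ) (by linarith) (by linarith)
        have h4 : cf j * (κ j * inp j (t + h)) ≤ ι j * f j (inp j s) :=
          le_trans (mul_le_mul_of_nonneg_left hAle (hcf j).le) hflow
        rw [hιε j hj] at h4
        have h5 : ε j * f j (inp j s) ≤ -(cf j * (κ j * inp j (t + h))) := by
          nlinarith [h4]
        have hee : Real.exp (lam j * t) ≤ Real.exp (lam j * s) :=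
          Real.exp_le_exp.mpr (mul_le_mul_of_nonneg_left hs1.le (hlam j hj).le)
        have hcA : 0 < cf j * (κ j * inp j (t + h)) := mul_pos (hcf j) hA
        have p1 : 0 ≤ Real.exp (lam j * s) *
            (-(cf j * (κ j * inp j (t + h))) - ε j * f j (inp j s)) :=
          mul_nonneg (Real.exp_pos _).le (by linarith)
        have p2 : 0 ≤ (Real.exp (lam j * s) - Real.exp (lam j * t)) *
            (cf j * (κ j * inp j (t + h))) :=
          mul_nonneg (by linarith) hcA.le
        nlinarith [p1, p2]
      have hmvt := mvt_lower (y j)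
        (fun s => Real.exp (lam j * s) * (ε j * f j (inp j s)))
        t (t + h) (by linarith)
        ((hyc j hj T le_rfl).mono (fun u hu => le_trans (by linarith : T ≤ t) hu.1))
        (fun s hs => hyderiv j hj s (by
          have := hs.1; linarith))
        (cf j * Real.exp (lam j * t) * (κ j * inp j (t + h)))
        hbound
        (le_of_lt (hypos j hj (t+h) (by linarith)))
      rw [show t + h - t = h from by ring] at hmvt
      have hyt : y j t = ε j * x j t * Real.exp (lam j * t) := by
        simp only [hydef]; ring
      rw [hyt] at hmvt
      have hE : (0:ℝ) < Real.exp (lam j * t) := Real.exp_pos _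
      refine le_of_mul_le_mul_right ?_ hE
      nlinarith [hmvt]
    -- compose the steps around the loop
    have hQ : ∀ k : ℕ, 0 < ∏ i ∈ Finset.range k, (cf i * h) :=
      fun k => Finset.prod_pos (fun i _ => mul_pos (hcf i) hh)
    have hchain : ∀ k : ℕ, k ≤ n - 1 → ∀ t : ℝ, T₁ ≤ t →
        (∏ i ∈ Finset.range k, (cf i * h)) * (ε k * x k (t + k * h)) ≤
          ε 0 * x 0 t := by
      intro k
      induction k with
      | zero => intro _ t ht; simp
      | succ k ih =>
        intro hk t ht
        have hkn : k + 1 < n := by omega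
        have hik := ih (by omega) t ht
        have hkh : (0:ℝ) ≤ (k:ℝ) * h := by positivity
        have hs := hstep k (by omega) (t + k * h) (by linarith)
        rw [show κ k = ε (k+1) from by simp only [hκdef]; rw [if_pos hkn]] at hs
        rw [show inp k (t + k*h + h) = x (k+1) (t + k*h + h) from by
          simp only [hinpdef]; rw [if_pos hkn]] at hs
        rw [show t + (k:ℝ) * h + h = t + ((k+1 : ℕ) : ℝ) * h from by push_cast; ring] at hs
        calc (∏ i ∈ Finset.range (k+1), (cf i * h)) *
              (ε (k+1) * x (k+1) (t + ((k+1:ℕ):ℝ) * h))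
            = (∏ i ∈ Finset.range k, (cf i * h)) *
              (cf k * h * (ε (k+1) * x (k+1) (t + ((k+1:ℕ):ℝ) * h))) := by
              rw [Finset.prod_range_succ]; ring
          _ ≤ (∏ i ∈ Finset.range k, (cf i * h)) * (ε k * x k (t + k * h)) :=
              mul_le_mul_of_nonneg_left hs (hQ k).le
          _ ≤ ε 0 * x 0 t := hik
    set K := (∏ i ∈ Finset.range (n-1), (cf i * h)) * (cf (n-1) * h) with hKdef
    have hKpos : 0 < K := mul_pos (hQ (n-1)) (mul_pos (hcf _) hh)
    have hn0 : (n:ℝ) ≠ 0 := ne_of_gt hnR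
    have hloop : ∀ t : ℝ, T₁ ≤ t → K * (ε 0 * x 0 (t - τ/2)) ≤ ε 0 * x 0 t := by
      intro t ht
      have h1 := hchain (n-1) le_rfl t ht
      have hkh : (0:ℝ) ≤ ((n-1:ℕ):ℝ) * h := by positivity
      have h2 := hstep (n-1) (by omega) (t + ((n-1:ℕ):ℝ) * h) (by linarith)
      have hnot : ¬ ((n-1) + 1 < n) := by omega
      rw [show κ (n-1) = ε 0 from by simp only [hκdef]; rw [if_neg hnot]] at h2
      rw [show inp (n-1) (t + ((n-1:ℕ):ℝ) * h + h) =
          x 0 (t + ((n-1:ℕ):ℝ) * h + h - τ) from by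
        simp only [hinpdef]; rw [if_neg hnot]] at h2
      have harg : t + ((n-1:ℕ):ℝ) * h + h - τ = t - τ/2 := by
        have hcast : ((n-1:ℕ):ℝ) = (n:ℝ) - 1 := by
          rw [Nat.cast_sub hn]; simp
        rw [hcast, hhdef]
        field_simp
        ring
      rw [harg] at h2
      calc K * (ε 0 * x 0 (t - τ/2))
          = (∏ i ∈ Finset.range (n-1), (cf i * h)) *
            (cf (n-1) * h * (ε 0 * x 0 (t - τ/2))) := by rw [hKdef]; ring
        _ ≤ (∏ i ∈ Finset.range (n-1), (cf i * h)) *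
            (ε (n-1) * x (n-1) (t + ((n-1:ℕ):ℝ) * h)) :=
            mul_le_mul_of_nonneg_left h2 (hQ _).le
        _ ≤ ε 0 * x 0 t := h1
    -- choose μ and derive the contradiction along a grid
    set μ := 2/τ * |Real.log K| + 1 with hμdef
    have hμpos : 0 < μ := by
      have h1 : 0 ≤ 2/τ * |Real.log K| :=
        mul_nonneg (div_nonneg (by norm_num) hτ.le) (abs_nonneg _)
      rw [hμdef]; linarith
    have hP1 : 1 ≤ K * Real.exp (μ * (τ/2)) := by
      have h1 : μ * (τ/2) = |Real.log K| + τ/2 := by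
        rw [hμdef]; field_simp
      have hlog : -Real.log K ≤ μ * (τ/2) := by
        have h2 := neg_le_abs (Real.log K)
        linarith
      have h2 : Real.exp (-Real.log K) ≤ Real.exp (μ * (τ/2)) :=
        Real.exp_le_exp.mpr hlog
      rw [Real.exp_neg, Real.exp_log hKpos] at h2
      calc (1:ℝ) = K * K⁻¹ := by field_simp
        _ ≤ K * Real.exp (μ * (τ/2)) := mul_le_mul_of_nonneg_left h2 hKpos.le
    have ha0 : 0 < ε 0 * x 0 T₁ := hεp 0 hn T₁ hTT₁
    have hgrid : ∀ m : ℕ, (ε 0 * x 0 T₁) * Real.exp (μ * T₁) *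
        (K * Real.exp (μ * (τ/2)))^m ≤
        ε 0 * x 0 (T₁ + m * (τ/2)) * Real.exp (μ * (T₁ + m * (τ/2))) := by
      intro m
      induction m with
      | zero => simp
      | succ m ih =>
        have hmh : (0:ℝ) ≤ ((m+1:ℕ):ℝ) * (τ/2) := by positivity
        have hx1 : K * (ε 0 * x 0 (T₁ + (m:ℝ) * (τ/2))) ≤
            ε 0 * x 0 (T₁ + ((m+1:ℕ):ℝ) * (τ/2)) := by
          have hl := hloop (T₁ + ((m+1:ℕ):ℝ) * (τ/2)) (by linarith)
          rw [show T₁ + ((m+1:ℕ):ℝ) * (τ/2) - τ/2 = T₁ + (m:ℝ) * (τ/2) from by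
            push_cast; ring] at hl
          exact hl
        have hexp1 : Real.exp (μ * (T₁ + ((m+1:ℕ):ℝ) * (τ/2))) =
            Real.exp (μ * (T₁ + (m:ℝ) * (τ/2))) * Real.exp (μ * (τ/2)) := by
          rw [← Real.exp_add]; congr 1; push_cast; ring
        have hxpos : 0 < ε 0 * x 0 (T₁ + (m:ℝ) * (τ/2)) := by
          have : (0:ℝ) ≤ (m:ℝ) * (τ/2) := by positivity
          exact hεp 0 hn _ (by linarith)
        have hepos : (0:ℝ) < Real.exp (μ * (T₁ + (m:ℝ) * (τ/2))) := Real.exp_pos _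
        have hepos2 : (0:ℝ) < Real.exp (μ * (τ/2)) := Real.exp_pos _
        have step1 : (ε 0 * x 0 T₁) * Real.exp (μ * T₁) *
            (K * Real.exp (μ * (τ/2)))^(m+1) ≤
            (ε 0 * x 0 (T₁ + (m:ℝ) * (τ/2)) *
              Real.exp (μ * (T₁ + (m:ℝ) * (τ/2)))) * (K * Real.exp (μ * (τ/2))) := by
          rw [pow_succ, ← mul_assoc]
          exact mul_le_mul_of_nonneg_right ih (mul_pos hKpos hepos2).le
        have step2 : (ε 0 * x 0 (T₁ + (m:ℝ) * (τ/2)) *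
              Real.exp (μ * (T₁ + (m:ℝ) * (τ/2)))) * (K * Real.exp (μ * (τ/2))) ≤
            ε 0 * x 0 (T₁ + ((m+1:ℕ):ℝ) * (τ/2)) *
              Real.exp (μ * (T₁ + ((m+1:ℕ):ℝ) * (τ/2))) := by
          rw [hexp1]
          nlinarith [mul_le_mul_of_nonneg_right hx1 (mul_nonneg hepos.le hepos2.le)]
        calc (ε 0 * x 0 T₁) * Real.exp (μ * T₁) * (K * Real.exp (μ * (τ/2)))^(m+1)
            ≤ _ := step1
          _ ≤ _ := step2
    have hseq : Tendsto (fun m : ℕ => T₁ + (m:ℝ) * (τ/2)) atTop atTop :=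
      tendsto_atTop_add_const_left _ _
        (tendsto_natCast_atTop_atTop.atTop_mul_const (by linarith : (0:ℝ) < τ/2))
    have htend := (hcon μ hμpos 0 hn).comp hseq
    have hbpos : 0 < (ε 0 * x 0 T₁) * Real.exp (μ * T₁) :=
      mul_pos ha0 (Real.exp_pos _)
    have hev3 := (Metric.tendsto_nhds.mp htend) _ hbpos
    obtain ⟨m, hm⟩ := hev3.exists
    simp only [Function.comp_apply] at hm
    rw [Real.dist_eq, sub_zero] at hm
    have hPm : 1 ≤ (K * Real.exp (μ * (τ/2)))^m := one_le_pow₀ hP1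
    have hlb := hgrid m
    have hub : ε 0 * x 0 (T₁ + (m:ℝ) * (τ/2)) *
        Real.exp (μ * (T₁ + (m:ℝ) * (τ/2))) ≤
        |x 0 (T₁ + (m:ℝ) * (τ/2)) * Real.exp (μ * (T₁ + (m:ℝ) * (τ/2)))| := by
      have := sign_mul_le_abs (x 0 (T₁ + (m:ℝ) * (τ/2)) *
        Real.exp (μ * (T₁ + (m:ℝ) * (τ/2)))) (hε1 0)
      nlinarith [this]
    nlinarith [hlb, hm, hub, hPm, hbpos]
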